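/- Let q be a prime power, m ≥ 2 an integer, and λ a partition of m such that S_{λ,F_q} is nonempty. Then |D_{λ,F_q}| ≥ (q-1)/g, where g = gcd(q-1, m(m-1)). -/

import Mathlib

open Polynomial
open scoped Classical

/-- The discriminant of a polynomial `f` of degree `m ≥ 2` over a field `F`, computed in an
algebraic closure via the standard formula
`disc(f) = (-1)^(m(m-1)/2) · a_m^(m-2) · ∏_i f'(α_i)`, where `a_m` is the leading coefficient
and the `α_i` are the roots of `f` (with multiplicity) in the algebraic closure; this equals
`a_m^(2m-2) · ∏_{i<j} (α_i - α_j)^2`.  For `f` of degree at most 1 it is defined to be `1`. -/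
noncomputable def polyDisc {F : Type*} [Field F] (f : F[X]) : AlgebraicClosure F :=
  if f.natDegree ≤ 1 then 1
  else
    (-1) ^ (f.natDegree * (f.natDegree - 1) / 2) *
      algebraMap F (AlgebraicClosure F) f.leadingCoeff ^ (f.natDegree - 2) *
      (Multiset.map (fun a => ((derivative f).map (algebraMap F (AlgebraicClosure F))).eval a)
        (f.map (algebraMap F (AlgebraicClosure F))).roots).prod

/-- The Möbius function on polynomials over a field: `μ f = (-1)^k` if `f` is squarefree
with `k` (distinct) monic irreducible factors, and `μ f = 0` otherwise. -/
noncomputable def polyMu {F : Type*} [Field F] (f : F[X]) : ℤ :=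
  if Squarefree f then (-1) ^ {π : F[X] | π.Monic ∧ Irreducible π ∧ π ∣ f}.ncard else 0

/-- `f` has factorization type `λ` (a partition of `m`): `f` is a product of distinct monic
irreducible polynomials whose degrees form the multiset of parts of `λ`.  The set
`S_{λ,F}` of monic squarefree polynomials of factorization type `λ` is
`{f | hasFactorizationType f λ}`. -/
def hasFactorizationType {F : Type*} [Field F] (f : F[X]) {m : ℕ} (lam : m.Partition) : Prop :=
  ∃ s : Finset F[X], (∀ π ∈ s, π.Monic ∧ Irreducible π) ∧ (∏ π ∈ s, π) = f ∧
    Multiset.map natDegree s.val = lam.parts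

section Aux

variable {F : Type*} [Field F]

lemma scaleRoots_X_sub_C' (a c : F) : (X - C a).scaleRoots c = X - C (c * a) := by
  ext n
  rw [coeff_scaleRoots, natDegree_X_sub_C]
  match n with
  | 0 => simp [mul_comm]
  | 1 => simp
  | (n+2) => simp [coeff_X, coeff_C]

lemma scaleRoots_multiset_prod' (M : Multiset F) (c : F) :
    ((M.map fun a => X - C a).prod).scaleRoots c
      = ((M.map fun a => c * a).map fun a => X - C a).prod := by
  induction M using Multiset.induction with
  | empty => simp [one_scaleRoots]
  | cons a M ih =>
    simp only [Multiset.map_cons, Multiset.prod_cons]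
    rw [mul_scaleRoots_of_noZeroDivisors, ih, scaleRoots_X_sub_C']

lemma scaleRoots_finset_prod' (s : Finset F[X]) (c : F) :
    (∏ π ∈ s, π).scaleRoots c = ∏ π ∈ s, π.scaleRoots c := by
  classical
  induction s using Finset.induction with
  | empty => simp [one_scaleRoots]
  | insert _ _ h ih =>
    rw [Finset.prod_insert h, Finset.prod_insert h, mul_scaleRoots_of_noZeroDivisors, ih]

lemma scaleRoots_scaleRoots_inv' (p : F[X]) {c : F} (hc : c ≠ 0) :
    (p.scaleRoots c).scaleRoots c⁻¹ = p := by
  rw [← scaleRoots_mul, mul_inv_cancel₀ hc, scaleRoots_one]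

lemma isUnit_scaleRoots_iff' (p : F[X]) (c : F) : IsUnit (p.scaleRoots c) ↔ IsUnit p := by
  rw [isUnit_iff_degree_eq_zero, isUnit_iff_degree_eq_zero, degree_scaleRoots]

lemma irreducible_scaleRoots' {p : F[X]} (hp : Irreducible p) {c : F} (hc : c ≠ 0) :
    Irreducible (p.scaleRoots c) := by
  constructor
  · rw [isUnit_scaleRoots_iff']; exact hp.not_isUnit
  · intro a b hab
    have h2 : p = a.scaleRoots c⁻¹ * b.scaleRoots c⁻¹ := by
      conv_lhs => rw [← scaleRoots_scaleRoots_inv' p hc, hab]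
      rw [mul_scaleRoots_of_noZeroDivisors]
    rcases hp.isUnit_or_isUnit h2 with h | h
    · exact Or.inl ((isUnit_scaleRoots_iff' a c⁻¹).mp h)
    · exact Or.inr ((isUnit_scaleRoots_iff' b c⁻¹).mp h)

lemma key_multiset' {K : Type*} [Field K] (M : Multiset K) {c : K} (hc : c ≠ 0) :
    ((M.map fun b => c * b).map fun a =>
        eval a (derivative ((M.map fun b => c * b).map fun a => X - C a).prod)).prod =
      c ^ (Multiset.card M * (Multiset.card M - 1)) *
        (M.map fun a => eval a (derivative (M.map fun a => X - C a).prod)).prod := by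
  classical
  have hL : ((M.map fun b => c * b).map fun a =>
        eval a (derivative ((M.map fun b => c * b).map fun a => X - C a).prod)).prod
      = ((M.map fun b => c * b).map fun a =>
          (((M.map fun b => c * b).erase a).map fun b => a - b).prod).prod :=
    congrArg Multiset.prod
      (Multiset.map_congr rfl fun a ha => eval_multiset_prod_X_sub_C_derivative ha)
  have hR : (M.map fun a => eval a (derivative (M.map fun a => X - C a).prod)).prod
      = (M.map fun a => ((M.erase a).map fun b => a - b).prod).prod :=
    congrArg Multiset.prod
      (Multiset.map_congr rfl fun a ha => eval_multiset_prod_X_sub_C_derivative ha)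
  rw [hL, hR, Multiset.map_map]
  have hstep : ∀ a ∈ M,
      ((fun a => (((M.map fun b => c * b).erase a).map fun b => a - b).prod) ∘ fun b => c * b) a
        = c ^ (Multiset.card M - 1) * ((M.erase a).map fun b => a - b).prod := by
    intro a ha
    simp only [Function.comp]
    rw [← Multiset.map_erase _ (mul_right_injective₀ hc), Multiset.map_map]
    have : ((M.erase a).map ((fun b => c * a - b) ∘ fun b => c * b))
        = (M.erase a).map fun b => c * (a - b) := by
      apply Multiset.map_congr rfl
      intro b _
      simp [mul_sub]
    rw [this]
    have : ((M.erase a).map fun b => c * (a - b))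
        = (M.erase a).map fun b => c * ((fun b => a - b) b) := rfl
    rw [this, Multiset.prod_map_mul, Multiset.map_const', Multiset.prod_replicate,
      Multiset.card_erase_of_mem ha]
    rfl
  rw [Multiset.map_congr rfl hstep, Multiset.prod_map_mul, Multiset.map_const',
    Multiset.prod_replicate, ← pow_mul, Nat.mul_comm]

lemma polyDisc_scaleRoots {f : F[X]} (hf : f.Monic)
    (hdeg : 2 ≤ f.natDegree) {c : F} (hc : c ≠ 0) :
    polyDisc (f.scaleRoots c) =
      algebraMap F (AlgebraicClosure F) c ^ (f.natDegree * (f.natDegree - 1)) * polyDisc f := by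
  set K := AlgebraicClosure F
  set ι : F →+* K := algebraMap F K with hι
  have hιinj : Function.Injective ι := ι.injective
  have hc' : ι c ≠ 0 := fun h => hc (hιinj (by simpa using h))
  have hfm : (f.map ι).Monic := hf.map ι
  have hsp : Splits (f.map ι) := IsAlgClosed.splits _
  set R : Multiset K := (f.map ι).roots with hR
  have hcard : Multiset.card R = f.natDegree := by
    rw [hR, ← (IsAlgClosed.splits (f.map ι)).natDegree_eq_card_roots, natDegree_map]
  have hprodR : f.map ι = (R.map fun a => X - C a).prod :=
    hsp.eq_prod_roots_of_monic hfm
  have hlc : ι f.leadingCoeff ≠ 0 := by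
    rw [hf.leadingCoeff]; simp
  have hg : (f.scaleRoots c).map ι = ((R.map fun b => ι c * b).map fun a => X - C a).prod := by
    rw [map_scaleRoots f c ι hlc, hprodR, scaleRoots_multiset_prod']
  have hgroots : ((f.scaleRoots c).map ι).roots = R.map fun b => ι c * b := by
    rw [hg, roots_multiset_prod_X_sub_C]
  have hnd : (f.scaleRoots c).natDegree = f.natDegree := natDegree_scaleRoots f c
  have hglc : (f.scaleRoots c).leadingCoeff = 1 := (monic_scaleRoots_iff c).mpr hf
  rw [polyDisc, polyDisc, if_neg (by omega), if_neg (by omega), hnd, hglc, hf.leadingCoeff]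
  rw [← hι, ← derivative_map, ← derivative_map, hgroots, hg, hprodR]
  rw [key_multiset' R hc', hcard, roots_multiset_prod_X_sub_C]
  ring

lemma polyDisc_ne_zero {f : F[X]} (hsep : f.Separable) :
    polyDisc f ≠ 0 := by
  rw [polyDisc]
  split
  · exact one_ne_zero
  · rename_i hdeg
    set K := AlgebraicClosure F
    set ι : F →+* K := algebraMap F K with hι
    have hf0 : f ≠ 0 := fun h => hdeg (by simp [h])
    have hlc : ι f.leadingCoeff ≠ 0 := by
      simpa using fun h => hf0 (leadingCoeff_eq_zero.mp (ι.injective (by simpa using h)))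
    refine mul_ne_zero (mul_ne_zero ?_ ?_) ?_
    · exact pow_ne_zero _ (neg_ne_zero.mpr one_ne_zero)
    · exact pow_ne_zero _ hlc
    · apply Multiset.prod_ne_zero
      intro h0
      obtain ⟨a, ha, ha0⟩ := Multiset.mem_map.mp h0
      have haroot : (f.map ι).eval a = 0 := (mem_roots (Polynomial.map_ne_zero hf0)).mp ha
      have hsepK : (f.map ι).Separable := hsep.map
      obtain ⟨u, v, huv⟩ := hsepK
      have := congrArg (eval a) huv
      rw [← derivative_map] at ha0
      simp only [eval_add, eval_mul, eval_one, haroot, ha0, mul_zero, zero_add] at this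
      exact zero_ne_one this

lemma separable_of_factors [Finite F] {s : Finset F[X]}
    (h : ∀ π ∈ s, π.Monic ∧ Irreducible π) : (∏ π ∈ s, π).Separable := by
  apply separable_prod'
  · intro x hx y hy hxy
    refine ((h x hx).2.coprime_iff_not_dvd).mpr fun hdvd => hxy ?_
    exact eq_of_monic_of_associated (h x hx).1 (h y hy).1
      ((h x hx).2.associated_of_dvd (h y hy).2 hdvd)
  · intro x hx
    exact PerfectField.separable_of_irreducible (h x hx).2

lemma hft_scaleRoots {f : F[X]} {m : ℕ} {lam : m.Partition}
    (h : hasFactorizationType f lam) {c : F} (hc : c ≠ 0) :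
    hasFactorizationType (f.scaleRoots c) lam := by
  obtain ⟨s, hs, hprod, hdeg⟩ := h
  have hinj : Set.InjOn (fun p : F[X] => p.scaleRoots c) ↑s := by
    intro a _ b _ hab
    have := congrArg (fun p : F[X] => p.scaleRoots c⁻¹) hab
    simpa [scaleRoots_scaleRoots_inv' _ hc] using this
  refine ⟨s.image (fun p => p.scaleRoots c), ?_, ?_, ?_⟩
  · intro π hπ
    obtain ⟨ρ, hρ, rfl⟩ := Finset.mem_image.mp hπ
    exact ⟨(monic_scaleRoots_iff c).mpr (hs ρ hρ).1, irreducible_scaleRoots' (hs ρ hρ).2 hc⟩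
  · rw [Finset.prod_image (fun a ha b hb => hinj ha hb), ← scaleRoots_finset_prod', hprod]
  · rw [Finset.image_val_of_injOn hinj, Multiset.map_map]
    rw [← hdeg]
    apply Multiset.map_congr rfl
    intro p _
    exact natDegree_scaleRoots p c

lemma hft_monic_natDegree {f : F[X]} {m : ℕ} {lam : m.Partition}
    (h : hasFactorizationType f lam) : f.Monic ∧ f.natDegree = m := by
  obtain ⟨s, hs, hprod, hdeg⟩ := h
  have hπ0 : ∀ π ∈ s, π ≠ (0 : F[X]) := fun π hπ => ((hs π hπ).2).ne_zero
  constructor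
  · rw [← hprod]
    exact monic_prod_of_monic s _ fun π hπ => (hs π hπ).1
  · rw [← hprod, natDegree_prod _ _ hπ0]
    have : ∑ π ∈ s, π.natDegree = (Multiset.map natDegree s.val).sum := rfl
    rw [this, hdeg, lam.parts_sum]

end Aux

/-- If `λ` is a partition of `m ≥ 2` such that `S_{λ,F_q}` is nonempty, then the set
`D_{λ,F_q}` of discriminants of polynomials in `S_{λ,F_q}` has at least `(q-1)/g` elements,
where `g = gcd(q-1, m(m-1))`. -/
theorem stmt10 {F : Type*} [Field F] [Fintype F] (q m : ℕ) (hq : Fintype.card F = q)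
    (hm : 2 ≤ m) (lam : m.Partition) (hne : ∃ f : F[X], hasFactorizationType f lam) :
    (q - 1) / Nat.gcd (q - 1) (m * (m - 1)) ≤
      (polyDisc '' {f : F[X] | hasFactorizationType f lam}).ncard := by
  classical
  obtain ⟨f₀, hf₀⟩ := hne
  set K := AlgebraicClosure F
  set ι : F →+* K := algebraMap F K with hι
  set S : Set F[X] := {f | hasFactorizationType f lam} with hS
  set N := m * (m - 1) with hN
  set g := Nat.gcd (q - 1) N with hg
  obtain ⟨hmon, hnd⟩ := hft_monic_natDegree hf₀
  have hsep : f₀.Separable := by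
    obtain ⟨s, hs, hprod, -⟩ := hf₀
    rw [← hprod]
    exact separable_of_factors hs
  set d : K := polyDisc f₀ with hd
  have hd0 : d ≠ 0 := polyDisc_ne_zero hsep
  have hm2 : 2 ≤ f₀.natDegree := by omega
  -- membership of scaled discriminants
  have hmem : ∀ c : Fˣ, ι (c : F) ^ N * d ∈ polyDisc '' S := by
    intro c
    refine ⟨f₀.scaleRoots (c : F), hft_scaleRoots hf₀ c.ne_zero, ?_⟩
    rw [polyDisc_scaleRoots hmon hm2 c.ne_zero, hnd, ← hd, ← hι, ← hN]
  -- finiteness of S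
  have hSfin : S.Finite := by
    apply Set.Finite.of_finite_image (f := fun f : F[X] => fun i : Fin (m + 1) => f.coeff i)
      (Set.toFinite _)
    intro f hf p hp hfp
    have hfm : f.natDegree = m := (hft_monic_natDegree hf).2
    have hpm : p.natDegree = m := (hft_monic_natDegree hp).2
    ext n
    rcases le_or_gt n m with h | h
    · exact congrFun hfp ⟨n, by omega⟩
    · rw [coeff_eq_zero_of_natDegree_lt (by omega), coeff_eq_zero_of_natDegree_lt (by omega)]
  have hDfin : (polyDisc '' S).Finite := hSfin.image _
  -- the finset of scaled discriminants
  set ψ : Fˣ → K := fun c => ι (c : F) ^ N * d with hψ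
  set T : Finset K := Finset.univ.image ψ with hT
  have hTsub : ↑T ⊆ polyDisc '' S := by
    intro y hy
    obtain ⟨c, -, rfl⟩ := Finset.mem_image.mp hy
    exact hmem c
  have hTcard : T.card ≤ (polyDisc '' S).ncard := by
    rw [← Set.ncard_coe_finset]
    exact Set.ncard_le_ncard hTsub hDfin
  have hN0 : 0 < N := by
    have : 1 ≤ m - 1 := by omega
    calc 0 < 2 * 1 := by norm_num
    _ ≤ m * (m - 1) := Nat.mul_le_mul hm this
  have hg0 : 0 < g := Nat.gcd_pos_of_pos_right _ hN0
  -- fiber bound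
  have hfib : ∀ y ∈ T, (Finset.univ.filter fun c : Fˣ => ψ c = y).card ≤ g := by
    intro y hy
    obtain ⟨c₀, -, rfl⟩ := Finset.mem_image.mp hy
    have hstep : ∀ c : Fˣ, ψ c = ψ c₀ → (c * c₀⁻¹) ^ g = 1 := by
      intro c hc
      have h1 : ι (c : F) ^ N = ι (c₀ : F) ^ N := mul_right_cancel₀ hd0 hc
      have h2 : (c : F) ^ N = (c₀ : F) ^ N := by
        apply ι.injective
        rw [map_pow, map_pow, h1]
      have h3 : (c : Fˣ) ^ N = c₀ ^ N := Units.ext (by push_cast; exact h2)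
      have h4 : (c * c₀⁻¹) ^ N = 1 := by
        rw [mul_pow, h3, inv_pow, mul_inv_cancel]
      have h5 : (c * c₀⁻¹) ^ (q - 1) = 1 := by
        rw [← hq, ← Fintype.card_units]
        exact pow_card_eq_one
      have h6 : orderOf (c * c₀⁻¹) ∣ g :=
        Nat.dvd_gcd (orderOf_dvd_of_pow_eq_one h5) (orderOf_dvd_of_pow_eq_one h4)
      exact orderOf_dvd_iff_pow_eq_one.mp h6
    calc (Finset.univ.filter fun c : Fˣ => ψ c = ψ c₀).card
        ≤ (Finset.univ.filter fun x : Fˣ => x ^ g = 1).card := by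
          apply Finset.card_le_card_of_injOn (fun c => c * c₀⁻¹)
          · intro c hc
            simp only [Finset.mem_coe, Finset.mem_filter, Finset.mem_univ, true_and] at hc ⊢
            exact hstep c hc
          · intro a _ b _ hab
            exact mul_right_cancel hab
      _ ≤ (Polynomial.nthRoots g (1 : F)).toFinset.card := by
          apply Finset.card_le_card_of_injOn (fun x : Fˣ => (x : F))
          · intro x hx
            simp only [Finset.mem_coe, Finset.mem_filter, Finset.mem_univ, true_and] at hx
            rw [Finset.mem_coe, Multiset.mem_toFinset, Polynomial.mem_nthRoots hg0]
            have h' := congrArg (Units.val) hx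
            simpa using h'
          · intro a _ b _ hab
            exact Units.ext hab
      _ ≤ Multiset.card (Polynomial.nthRoots g (1 : F)) := Multiset.toFinset_card_le _
      _ ≤ g := Polynomial.card_nthRoots g 1
  have hcount : q - 1 ≤ g * T.card := by
    have := Finset.card_le_mul_card_image (f := ψ) Finset.univ g hfib
    rwa [Finset.card_univ, Fintype.card_units, hq] at this
  calc (q - 1) / g ≤ g * T.card / g := Nat.div_le_div_right hcount
    _ = T.card := Nat.mul_div_cancel_left _ hg0
    _ ≤ (polyDisc '' S).ncard := hTcard
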